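/- Transitivity of data equality in G: for every nominal i, all path expressions α,β, and every c ∈ Cmp, the sequent ⊢ @_i(⟨α =_c ε⟩ ∧ ⟨ε =_c β⟩ → ⟨α =_c β⟩) (with empty antecedent) is provable in G. -/

import Mathlib

namespace HXPathD

mutual
  inductive Path (P N M C : Type) : Type where
    | mod  : M → Path P N M C
    | nom  : N → Path P N M C
    | test : Node P N M C → Path P N M C
    | comp : Path P N M C → Path P N M C → Path P N M C

  inductive Node (P N M C : Type) : Type where
    | prop : P → Node P N M C
    | nom  : N → Node P N M C
    | bot  : Node P N M C
    | impl : Node P N M C → Node P N M C → Node P N M C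
    | at   : N → Node P N M C → Node P N M C
    | dia  : M → Node P N M C → Node P N M C
    | eq   : Path P N M C → C → Path P N M C → Node P N M C
    | neq  : Path P N M C → C → Path P N M C → Node P N M C
end

variable {P N M C : Type}

/-- Abbreviations. -/
def Node.neg (φ : Node P N M C) : Node P N M C := .impl φ .bot
def Node.top : Node P N M C := .impl .bot .bot
def Node.and (φ ψ : Node P N M C) : Node P N M C := .neg (.impl φ (.neg ψ))
def Node.iff (φ ψ : Node P N M C) : Node P N M C := .and (.impl φ ψ) (.impl ψ φ)
def Node.box (a : M) (φ : Node P N M C) : Node P N M C := .neg (.dia a (.neg φ))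
def Path.eps : Path P N M C := .test .top

/-- The node expression ⟨α⟩φ, obtained by the abbreviations
    ⟨j:⟩φ := @_jφ, ⟨ψ?⟩φ := ψ∧φ, ⟨αβ⟩φ := ⟨α⟩⟨β⟩φ (with ⟨a⟩φ primitive). -/
def Path.dia : Path P N M C → Node P N M C → Node P N M C
  | .mod a, φ => .dia a φ
  | .nom j, φ => .at j φ
  | .test ψ, φ => .and ψ φ
  | .comp α β, φ => α.dia (β.dia φ)

/-- A comparison ▲ ∈ {=_c, ≠_c : c ∈ Cmp}. -/
inductive Comparison (C : Type) : Type where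
  | ceq  : C → Comparison C
  | cneq : C → Comparison C

/-- The node expression ⟨α ▲ β⟩. -/
def Comparison.node : Comparison C → Path P N M C → Path P N M C → Node P N M C
  | .ceq c, α, β => .eq α c β
  | .cneq c, α, β => .neq α c β

/-- A hybrid data model. -/
structure Model (P N M C : Type) where
  W : Type
  nonempty : Nonempty W
  R : M → W → W → Prop
  E : C → W → W → Prop
  E_equiv : ∀ c, Equivalence (E c)
  g : N → W
  V : P → W → Prop

mutual
  def Model.satPath (𝔐 : Model P N M C) : Path P N M C → 𝔐.W → 𝔐.W → Prop
    | .mod a, n, n' => 𝔐.R a n n'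
    | .nom i, _, n' => 𝔐.g i = n'
    | .test φ, n, n' => n = n' ∧ 𝔐.sat φ n
    | .comp α β, n, n' => ∃ n'', 𝔐.satPath α n n'' ∧ 𝔐.satPath β n'' n'

  def Model.sat (𝔐 : Model P N M C) : Node P N M C → 𝔐.W → Prop
    | .prop p, n => 𝔐.V p n
    | .nom i, n => 𝔐.g i = n
    | .bot, _ => False
    | .impl φ ψ, n => 𝔐.sat φ n → 𝔐.sat ψ n
    | .at i φ, _ => 𝔐.sat φ (𝔐.g i)
    | .dia a φ, n => ∃ n', 𝔐.R a n n' ∧ 𝔐.sat φ n'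
    | .eq α c β, n => ∃ n' n'', 𝔐.satPath α n n' ∧ 𝔐.satPath β n n'' ∧ 𝔐.E c n' n''
    | .neq α c β, n => ∃ n' n'', 𝔐.satPath α n n' ∧ 𝔐.satPath β n n'' ∧ ¬ 𝔐.E c n' n''
end

mutual
  def Path.noms : Path P N M C → Set N
    | .mod _ => ∅
    | .nom i => {i}
    | .test φ => φ.noms
    | .comp α β => α.noms ∪ β.noms

  def Node.noms : Node P N M C → Set N
    | .prop _ => ∅
    | .nom i => {i}
    | .bot => ∅
    | .impl φ ψ => φ.noms ∪ ψ.noms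
    | .at i φ => insert i φ.noms
    | .dia _ φ => φ.noms
    | .eq α _ β => α.noms ∪ β.noms
    | .neq α _ β => α.noms ∪ β.noms
end

/-- Node expressions of the admissible forms for sequents:
    ⟨i: ▲ j:⟩ or @_iφ. -/
def Node.Admissible : Node P N M C → Prop
  | .at _ _ => True
  | .eq (.nom _) _ (.nom _) => True
  | .neq (.nom _) _ (.nom _) => True
  | _ => False

/-- A sequent: antecedent and consequent. -/
abbrev Sequent (P N M C : Type) := Set (Node P N M C) × Set (Node P N M C)

/-- The nominal `j` does not occur in the set `S`. -/
def FreshIn (j : N) (S : Set (Node P N M C)) : Prop := ∀ φ ∈ S, j ∉ φ.noms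

/-- Shape restriction on the axiom (Ax). -/
inductive AxForm : Node P N M C → Prop where
  | prop (i : N) (p : P) : AxForm (.at i (.prop p))
  | nom (i j : N) : AxForm (.at i (.nom j))
  | eq (i : N) (c : C) (j : N) : AxForm (.eq (.nom i) c (.nom j))

/-- Shape restriction on the rule (S1): φ is p, ⊥ or ⟨a⟩k. -/
inductive S1Form : Node P N M C → Prop where
  | prop (p : P) : S1Form (.prop p)
  | bot : S1Form .bot
  | dia (a : M) (k : N) : S1Form (.dia a (.nom k))

/-- One rule instance of the sequent calculus G: `Step cut prems concl` holds iff
    `concl` may be inferred from the premisses `prems` by a rule of G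
    (when `cut = false`, the rule (Cut) is excluded). -/
inductive Step (cut : Bool) : List (Sequent P N M C) → Sequent P N M C → Prop where
  | ax {Γ Δ : Set (Node P N M C)} {φ} (h : AxForm φ) :
      Step cut [] (insert φ Γ, insert φ Δ)
  | bot {Γ Δ : Set (Node P N M C)} (i : N) :
      Step cut [] (insert (.at i .bot) Γ, Δ)
  | implL {Γ Δ : Set (Node P N M C)} (i : N) (φ ψ : Node P N M C) :
      Step cut [(Γ, insert (.at i φ) Δ), (insert (.at i ψ) Γ, Δ)]
        (insert (.at i (.impl φ ψ)) Γ, Δ)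
  | implR {Γ Δ : Set (Node P N M C)} (i : N) (φ ψ : Node P N M C) :
      Step cut [(insert (.at i φ) Γ, insert (.at i ψ) Δ)]
        (Γ, insert (.at i (.impl φ ψ)) Δ)
  | atT {Γ Δ : Set (Node P N M C)} (i : N) :
      Step cut [(insert (.at i (.nom i)) Γ, Δ)] (Γ, Δ)
  | at5 {Γ Δ : Set (Node P N M C)} (i j k : N) :
      Step cut
        [(insert (.at j (.nom k)) (insert (.at i (.nom j)) (insert (.at i (.nom k)) Γ)), Δ)]
        (insert (.at i (.nom j)) (insert (.at i (.nom k)) Γ), Δ)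
  | nomRule {Γ Δ : Set (Node P N M C)} (i j : N)
      (hj : FreshIn j Γ) (hj' : FreshIn j Δ) :
      Step cut [(insert (.at i (.nom j)) Γ, Δ)] (Γ, Δ)
  | s1 {Γ Δ : Set (Node P N M C)} (i j : N) {φ : Node P N M C} (h : S1Form φ) :
      Step cut
        [(insert (.at j φ) (insert (.at i (.nom j)) (insert (.at i φ) Γ)), Δ)]
        (insert (.at i (.nom j)) (insert (.at i φ) Γ), Δ)
  | s2 {Γ Δ : Set (Node P N M C)} (i j k : N) (a : M) :
      Step cut
        [(insert (.at i (.dia a (.nom k)))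
            (insert (.at j (.nom k)) (insert (.at i (.dia a (.nom j))) Γ)), Δ)]
        (insert (.at j (.nom k)) (insert (.at i (.dia a (.nom j))) Γ), Δ)
  | s3 {Γ Δ : Set (Node P N M C)} (i j k : N) (c : C) :
      Step cut
        [(insert (.eq (.nom j) c (.nom k))
            (insert (.at i (.nom j)) (insert (.eq (.nom i) c (.nom k)) Γ)), Δ)]
        (insert (.at i (.nom j)) (insert (.eq (.nom i) c (.nom k)) Γ), Δ)
  | atL {Γ Δ : Set (Node P N M C)} (i j : N) (φ : Node P N M C) :
      Step cut [(insert (.at i φ) Γ, Δ)] (insert (.at j (.at i φ)) Γ, Δ)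
  | atR {Γ Δ : Set (Node P N M C)} (i j : N) (φ : Node P N M C) :
      Step cut [(Γ, insert (.at i φ) Δ)] (Γ, insert (.at j (.at i φ)) Δ)
  | diaL {Γ Δ : Set (Node P N M C)} (i j : N) (a : M) (φ : Node P N M C)
      (hj : FreshIn j (insert (.at i (.dia a φ)) Γ)) (hj' : FreshIn j Δ) :
      Step cut
        [(insert (.at i (.dia a (.nom j))) (insert (.at j φ) Γ), Δ)]
        (insert (.at i (.dia a φ)) Γ, Δ)
  | diaR {Γ Δ : Set (Node P N M C)} (i j : N) (a : M) (φ : Node P N M C) :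
      Step cut
        [(insert (.at i (.dia a (.nom j))) Γ,
          insert (.at i (.dia a φ)) (insert (.at j φ) Δ))]
        (insert (.at i (.dia a (.nom j))) Γ, insert (.at i (.dia a φ)) Δ)
  | cmpL {Γ Δ : Set (Node P N M C)} (i j k : N) (α β : Path P N M C)
      (b : Comparison C) (hjk : j ≠ k)
      (hj : FreshIn j (insert (.at i (b.node α β)) Γ)) (hj' : FreshIn j Δ)
      (hk : FreshIn k (insert (.at i (b.node α β)) Γ)) (hk' : FreshIn k Δ) :
      Step cut
        [(insert (.at i (α.dia (.nom j)))
            (insert (.at i (β.dia (.nom k)))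
              (insert (b.node (.nom j) (.nom k)) Γ)), Δ)]
        (insert (.at i (b.node α β)) Γ, Δ)
  | cmpR {Γ Δ : Set (Node P N M C)} (i j k : N) (α β : Path P N M C)
      (b : Comparison C) :
      Step cut
        [(insert (.at i (α.dia (.nom j))) (insert (.at i (β.dia (.nom k))) Γ),
          insert (.at i (b.node α β)) (insert (b.node (.nom j) (.nom k)) Δ))]
        (insert (.at i (α.dia (.nom j))) (insert (.at i (β.dia (.nom k))) Γ),
          insert (.at i (b.node α β)) Δ)
  | eqT {Γ Δ : Set (Node P N M C)} (i : N) (c : C) :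
      Step cut [(insert (.eq (.nom i) c (.nom i)) Γ, Δ)] (Γ, Δ)
  | eq5 {Γ Δ : Set (Node P N M C)} (i j k : N) (c : C) :
      Step cut
        [(insert (.eq (.nom j) c (.nom k))
            (insert (.eq (.nom i) c (.nom j)) (insert (.eq (.nom i) c (.nom k)) Γ)), Δ)]
        (insert (.eq (.nom i) c (.nom j)) (insert (.eq (.nom i) c (.nom k)) Γ), Δ)
  | neqL {Γ Δ : Set (Node P N M C)} (i j : N) (c : C) :
      Step cut [(Γ, insert (.eq (.nom i) c (.nom j)) Δ)]
        (insert (.neq (.nom i) c (.nom j)) Γ, Δ)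
  | neqR {Γ Δ : Set (Node P N M C)} (i j : N) (c : C) :
      Step cut [(insert (.eq (.nom i) c (.nom j)) Γ, Δ)]
        (Γ, insert (.neq (.nom i) c (.nom j)) Δ)
  | cutRule {Γ Δ Γ' Δ' : Set (Node P N M C)} (φ : Node P N M C)
      (ha : φ.Admissible) (hc : cut = true) :
      Step cut [(Γ, insert φ Δ), (insert φ Γ', Δ')] (Γ ∪ Γ', Δ ∪ Δ')
  | wl {Γ Δ : Set (Node P N M C)} (φ : Node P N M C) (ha : φ.Admissible) :
      Step cut [(Γ, Δ)] (insert φ Γ, Δ)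
  | wr {Γ Δ : Set (Node P N M C)} (φ : Node P N M C) (ha : φ.Admissible) :
      Step cut [(Γ, Δ)] (Γ, insert φ Δ)

/-- Derivability in G (`Deriv true`) resp. in G without (Cut) (`Deriv false`):
    a derivation built from the rules whose leaves are instances of the
    zero-premiss rules (Ax) or (⊥). -/
inductive Deriv (cut : Bool) : Sequent P N M C → Prop where
  | step {prems : List (Sequent P N M C)} {concl : Sequent P N M C}
      (h : Step cut prems concl) (ih : ∀ s ∈ prems, Deriv cut s) : Deriv cut concl

/-- Γ ⊢_G Δ : the sequent is provable in G. -/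
def ProvableG (Γ Δ : Set (Node P N M C)) : Prop := Deriv true (Γ, Δ)

/-- M ⊩ φ : global satisfaction. -/
def Model.satG (𝔐 : Model P N M C) (φ : Node P N M C) : Prop := ∀ n, 𝔐.sat φ n

/-- Validity of a sequent. -/
def ValidSeq (S : Sequent P N M C) : Prop :=
  ∀ 𝔐 : Model P N M C, (∀ γ ∈ S.1, 𝔐.satG γ) → ∃ δ ∈ S.2, 𝔐.satG δ

/-- Formulas of the basic hybrid logic H(@): no data comparisons. -/
def Node.IsHybrid : Node P N M C → Prop
  | .prop _ => True
  | .nom _ => True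
  | .bot => True
  | .impl φ ψ => φ.IsHybrid ∧ ψ.IsHybrid
  | .at _ φ => φ.IsHybrid
  | .dia _ φ => φ.IsHybrid
  | .eq _ _ _ => False
  | .neq _ _ _ => False

section Aux

variable {cut : Bool}

lemma dzero {s : Sequent P N M C} (h : Step cut [] s) : Deriv cut s :=
  .step h (by simp)

lemma done' {t s : Sequent P N M C} (h : Step cut [t] s) (d : Deriv cut t) : Deriv cut s :=
  .step h (by rintro x hx; simp at hx; subst hx; exact d)

lemma dtwo {t u s : Sequent P N M C} (h : Step cut [t, u] s)
    (d1 : Deriv cut t) (d2 : Deriv cut u) : Deriv cut s :=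
  .step h (by rintro x hx; simp at hx; rcases hx with rfl | rfl; exacts [d1, d2])

lemma dcast {Γ Γ' Δ Δ' : Set (Node P N M C)} (h : Deriv cut (Γ, Δ))
    (e1 : Γ = Γ') (e2 : Δ = Δ') : Deriv cut (Γ', Δ') := e1 ▸ e2 ▸ h

lemma add_wl {Γ Δ : Set (Node P N M C)} (φ : Node P N M C) (ha : φ.Admissible)
    (h : Deriv cut (Γ, Δ)) : Deriv cut (insert φ Γ, Δ) :=
  done' (Step.wl φ ha) h

lemma add_eqT (x : N) (c : C) {Γ Δ : Set (Node P N M C)}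
    (h : Deriv cut (insert (.eq (.nom x) c (.nom x)) Γ, Δ)) : Deriv cut (Γ, Δ) :=
  done' (Step.eqT x c) h

lemma add_eq5 {x y z : N} {c : C} {Γ Δ : Set (Node P N M C)}
    (h1 : Node.eq (.nom x) c (.nom y) ∈ Γ) (h2 : Node.eq (.nom x) c (.nom z) ∈ Γ)
    (h : Deriv cut (insert (.eq (.nom y) c (.nom z)) Γ, Δ)) : Deriv cut (Γ, Δ) := by
  have e : insert (Node.eq (.nom x) c (.nom y))
      (insert (Node.eq (.nom x) c (.nom z)) Γ) = Γ := by
    rw [Set.insert_eq_self.2 h2, Set.insert_eq_self.2 h1]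
  exact dcast (done' (Step.eq5 x y z c) (dcast h (by rw [e]) rfl)) e rfl

lemma add_s3 {x y z : N} {c : C} {Γ Δ : Set (Node P N M C)}
    (h1 : Node.at x (.nom y) ∈ Γ) (h2 : Node.eq (.nom x) c (.nom z) ∈ Γ)
    (h : Deriv cut (insert (.eq (.nom y) c (.nom z)) Γ, Δ)) : Deriv cut (Γ, Δ) := by
  have e : insert (Node.at x (.nom y))
      (insert (Node.eq (.nom x) c (.nom z)) Γ) = Γ := by
    rw [Set.insert_eq_self.2 h2, Set.insert_eq_self.2 h1]
  exact dcast (done' (Step.s3 x y z c) (dcast h (by rw [e]) rfl)) e rfl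

lemma add_sym {x y : N} {c : C} {Γ Δ : Set (Node P N M C)}
    (h1 : Node.eq (.nom x) c (.nom y) ∈ Γ)
    (h : Deriv cut (insert (.eq (.nom y) c (.nom x)) Γ, Δ)) : Deriv cut (Γ, Δ) := by
  apply add_eqT x c
  apply add_eq5 (x := x) (y := y) (z := x) (Set.mem_insert_of_mem _ h1) (Set.mem_insert _ _)
  refine dcast (add_wl (.eq (.nom x) c (.nom x)) trivial h) ?_ rfl
  exact Set.insert_comm _ _ _

lemma unpackEps {i k : N} {Γ Δ : Set (Node P N M C)}
    (h : Deriv cut (insert (.at i (.nom k)) (insert (.at i Node.top) Γ),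
        insert (.at i .bot) Δ)) :
    Deriv cut (insert (.at i (Path.eps.dia (.nom k))) Γ, insert (.at i .bot) Δ) := by
  show Deriv cut
    (insert (.at i (.impl (.impl Node.top (.impl (.nom k) .bot)) .bot)) Γ, _)
  refine dtwo (Step.implL i _ .bot) ?_ (dzero (Step.bot i))
  refine done' (Step.implR i Node.top (.impl (.nom k) .bot)) ?_
  refine done' (Step.implR i (.nom k) .bot) ?_
  exact dcast h rfl (Set.insert_idem _ _).symm

mutual
  theorem path_noms_finite : ∀ α : Path P N M C, α.noms.Finite
    | .mod _ => by simp [Path.noms]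
    | .nom _ => by simp [Path.noms]
    | .test φ => by simpa [Path.noms] using node_noms_finite φ
    | .comp α β => by
        simpa [Path.noms] using (path_noms_finite α).union (path_noms_finite β)

  theorem node_noms_finite : ∀ φ : Node P N M C, φ.noms.Finite
    | .prop _ => by simp [Node.noms]
    | .nom _ => by simp [Node.noms]
    | .bot => by simp [Node.noms]
    | .impl φ ψ => by
        simpa [Node.noms] using (node_noms_finite φ).union (node_noms_finite ψ)
    | .at _ φ => by simpa [Node.noms] using node_noms_finite φ
    | .dia _ φ => by simpa [Node.noms] using node_noms_finite φ
    | .eq α _ β => by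
        simpa [Node.noms] using (path_noms_finite α).union (path_noms_finite β)
    | .neq α _ β => by
        simpa [Node.noms] using (path_noms_finite α).union (path_noms_finite β)
end

lemma dia_noms : ∀ (α : Path P N M C) (φ : Node P N M C),
    (α.dia φ).noms = α.noms ∪ φ.noms
  | .mod a, φ => by
      show φ.noms = ∅ ∪ φ.noms
      rw [Set.empty_union]
  | .nom j, φ => by
      show insert j φ.noms = {j} ∪ φ.noms
      rw [Set.insert_eq]
  | .test ψ, φ => by
      show (ψ.noms ∪ (φ.noms ∪ ∅)) ∪ ∅ = ψ.noms ∪ φ.noms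
      simp
  | .comp α β, φ => by
      show (α.dia (β.dia φ)).noms = (α.noms ∪ β.noms) ∪ φ.noms
      rw [dia_noms α, dia_noms β, Set.union_assoc]

lemma exists_fresh [Infinite N] {S : Set N} (hS : S.Finite) : ∃ j, j ∉ S :=
  hS.infinite_compl.nonempty

end Aux

set_option maxHeartbeats 2000000 in
/-- transitivity of data equality in G:
    ⊢ @_i(⟨α =_c ε⟩ ∧ ⟨ε =_c β⟩ → ⟨α =_c β⟩). -/
theorem eq_trans_provable {P N M C : Type} [Countable P] [Infinite P] [Countable N] [Infinite N] [Finite M] [Finite C]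
    (i : N) (α β : Path P N M C) (c : C) :
    ProvableG (∅ : Set (Node P N M C))
      {Node.at i (.impl
          (Node.and (.eq α c Path.eps) (.eq Path.eps c β))
          (.eq α c β))} := by
  classical
  have hfin : (insert i (α.noms ∪ β.noms)).Finite :=
    ((path_noms_finite α).union (path_noms_finite β)).insert i
  obtain ⟨j, hj⟩ := exists_fresh hfin
  obtain ⟨k, hk⟩ := exists_fresh (hfin.insert j)
  obtain ⟨j', hj'⟩ := exists_fresh ((hfin.insert j).insert k)
  obtain ⟨k', hk'⟩ := exists_fresh (((hfin.insert j).insert k).insert j')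
  simp only [Set.mem_insert_iff, Set.mem_union, not_or] at hj hk hj' hk'
  obtain ⟨hji, hjα, hjβ⟩ := hj
  obtain ⟨hkj, hki, hkα, hkβ⟩ := hk
  obtain ⟨hj'k, hj'j, hj'i, hj'α, hj'β⟩ := hj'
  obtain ⟨hk'j', hk'k, hk'j, hk'i, hk'α, hk'β⟩ := hk'
  set ε : Path P N M C := Path.eps with hε
  set φ : Node P N M C := .eq α c ε with hφ
  set ψ : Node P N M C := .eq ε c β with hψ
  set χ : Node P N M C := .eq α c β with hχ
  show Deriv true (∅, {Node.at i (.impl (.impl (.impl φ (.impl ψ .bot)) .bot) χ)})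
  refine dcast (Γ := ∅)
    (Δ := insert (Node.at i (.impl (.impl (.impl φ (.impl ψ .bot)) .bot) χ)) ∅)
    ?_ rfl (by simp)
  refine done' (Step.implR i _ _) ?_
  refine dtwo (Step.implL i (.impl φ (.impl ψ .bot)) .bot) ?_ (dzero (Step.bot i))
  refine done' (Step.implR i _ _) ?_
  refine done' (Step.implR i _ _) ?_
  -- goal: (insert (at i ψ) (insert (at i φ) ∅), insert (at i ⊥) (insert (at i χ) ∅))
  have freshΔ : ∀ x : N, x ≠ i → x ∉ α.noms → x ∉ β.noms →
      FreshIn x (insert (Node.at i .bot) (insert (Node.at i χ) (∅ : Set (Node P N M C)))) := by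
    intro x h1 h2 h3
    simp [FreshIn, hχ, Node.noms, Path.noms, h1, h2, h3]
  refine dcast (Γ := insert (Node.at i φ) (insert (Node.at i ψ) ∅)) ?_
    (by ext x; simp; try tauto) rfl
  refine done' (Step.cmpL i j k α ε (.ceq c) (Ne.symm hkj) ?_ (freshΔ j hji hjα hjβ)
    ?_ (freshΔ k hki hkα hkβ)) ?_
  · simp [FreshIn, Comparison.node, hφ, hψ, hε, Node.noms, Path.noms, Path.eps,
      Node.top, hji, hjα, hjβ]
  · simp [FreshIn, Comparison.node, hφ, hψ, hε, Node.noms, Path.noms, Path.eps,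
      Node.top, hki, hkα, hkβ]
  show Deriv true (insert (Node.at i (α.dia (.nom j)))
      (insert (Node.at i (ε.dia (.nom k)))
        (insert (Node.eq (.nom j) c (.nom k)) (insert (Node.at i ψ) ∅))),
    insert (Node.at i .bot) (insert (Node.at i χ) ∅))
  refine dcast (Γ := insert (Node.at i ψ)
      (insert (Node.at i (α.dia (.nom j)))
        (insert (Node.at i (ε.dia (.nom k)))
          (insert (Node.eq (.nom j) c (.nom k)) ∅)))) ?_
    (by ext x; simp; try tauto) rfl
  refine done' (Step.cmpL i j' k' ε β (.ceq c) (Ne.symm hk'j') ?_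
    (freshΔ j' hj'i hj'α hj'β) ?_ (freshΔ k' hk'i hk'α hk'β)) ?_
  · simp [FreshIn, Comparison.node, hφ, hψ, hε, Node.noms, Path.noms, Path.eps,
      Node.top, dia_noms, hj'i, hj'α, hj'β, hj'j, hj'k]
  · simp [FreshIn, Comparison.node, hφ, hψ, hε, Node.noms, Path.noms, Path.eps,
      Node.top, dia_noms, hk'i, hk'α, hk'β, hk'j, hk'k]
  show Deriv true (insert (Node.at i (ε.dia (.nom j')))
      (insert (Node.at i (β.dia (.nom k')))
        (insert (Node.eq (.nom j') c (.nom k'))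
          (insert (Node.at i (α.dia (.nom j)))
            (insert (Node.at i (ε.dia (.nom k)))
              (insert (Node.eq (.nom j) c (.nom k)) ∅))))),
    insert (Node.at i .bot) (insert (Node.at i χ) ∅))
  refine unpackEps ?_
  refine dcast (Γ := insert (Node.at i (ε.dia (.nom k)))
      (insert (Node.at i (.nom j'))
        (insert (Node.at i Node.top)
          (insert (Node.at i (β.dia (.nom k')))
            (insert (Node.eq (.nom j') c (.nom k'))
              (insert (Node.at i (α.dia (.nom j)))
                (insert (Node.eq (.nom j) c (.nom k)) ∅))))))) ?_
    (by ext x; simp; try tauto) rfl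
  refine unpackEps ?_
  refine dcast (Γ := insert (Node.at i (α.dia (.nom j)))
      (insert (Node.at i (β.dia (.nom k')))
        (insert (Node.at i (.nom k))
          (insert (Node.at i (.nom j'))
            (insert (Node.at i Node.top)
              (insert (Node.eq (.nom j') c (.nom k'))
                (insert (Node.eq (.nom j) c (.nom k)) ∅)))))))
    (Δ := insert (Node.at i χ) (insert (Node.at i .bot) ∅)) ?_
    (by ext x; simp; try tauto) (by ext x; simp; try tauto)
  refine done' (Step.cmpR i j k' α β (.ceq c)) ?_
  show Deriv true (insert (Node.at i (α.dia (.nom j)))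
      (insert (Node.at i (β.dia (.nom k')))
        (insert (Node.at i (.nom k))
          (insert (Node.at i (.nom j'))
            (insert (Node.at i Node.top)
              (insert (Node.eq (.nom j') c (.nom k'))
                (insert (Node.eq (.nom j) c (.nom k)) ∅)))))),
    insert (Node.at i χ) (insert (Node.eq (.nom j) c (.nom k'))
      (insert (Node.at i .bot) ∅)))
  apply add_sym (x := j) (y := k) (c := c) (by simp)
  apply add_eqT i c
  apply add_s3 (x := i) (y := k) (z := i) (c := c) (by simp) (by simp)
  apply add_sym (x := k) (y := i) (c := c) (by simp)
  apply add_s3 (x := i) (y := j') (z := k) (c := c) (by simp) (by simp)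
  apply add_sym (x := j') (y := k) (c := c) (by simp)
  apply add_eq5 (x := k) (y := j) (z := j') (c := c) (by simp) (by simp)
  apply add_sym (x := j) (y := j') (c := c) (by simp)
  apply add_eq5 (x := j') (y := j) (z := k') (c := c) (by simp) (by simp)
  refine dcast (Γ := insert (Node.eq (.nom j) c (.nom k'))
      (insert (Node.eq (.nom j') c (.nom j))
        (insert (Node.eq (.nom j) c (.nom j'))
          (insert (Node.eq (.nom k) c (.nom j'))
            (insert (Node.eq (.nom j') c (.nom k))
              (insert (Node.eq (.nom i) c (.nom k))
                (insert (Node.eq (.nom k) c (.nom i))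
                  (insert (Node.eq (.nom i) c (.nom i))
                    (insert (Node.eq (.nom k) c (.nom j))
                      (insert (Node.at i (α.dia (.nom j)))
                        (insert (Node.at i (β.dia (.nom k')))
                          (insert (Node.at i (.nom k))
                            (insert (Node.at i (.nom j'))
                              (insert (Node.at i Node.top)
                                (insert (Node.eq (.nom j') c (.nom k'))
                                  (insert (Node.eq (.nom j) c (.nom k)) ∅))))))))))))))))
    (Δ := insert (Node.eq (.nom j) c (.nom k'))
      (insert (Node.at i χ) (insert (Node.at i .bot) ∅))) ?_
    (by ext x; simp; try tauto) (by ext x; simp; try tauto)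
  exact dzero (Step.ax (AxForm.eq j c k'))

end HXPathD
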